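/- Let G be a solvable group and let n ≥ 3 be an integer, and set X = G^n. Then there exists an automorphism σ of the free group F_n with σ ≠ 1 such that σ_X is the identity map of X; equivalently, the group homomorphism Aut(F_n) → Sym(X), σ ↦ (σ^{-1})_X, is not injective. -/

import Mathlib

/-- The word map `σ_X : X → X` associated to an endomorphism `σ` of the free
group `F_n`, where `X = G^n`. -/
def wordMap {G : Type*} [Group G] {n : ℕ}
    (σ : FreeGroup (Fin n) →* FreeGroup (Fin n)) (x : Fin n → G) : Fin n → G :=
  fun i => FreeGroup.lift x (σ (FreeGroup.of i))

theorem freeGroup_fin2_not_solvable : ¬ Group.IsSolvable (FreeGroup (Fin 2)) := by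
  have hsurj : Function.Surjective
      (FreeGroup.lift ![finRotate 5, Equiv.swap 0 (finRotate 5 0)] :
        FreeGroup (Fin 2) →* Equiv.Perm (Fin 5)) := by
    rw [← MonoidHom.range_eq_top, FreeGroup.range_lift_eq_closure]
    have h := Equiv.Perm.closure_cycle_adjacent_swap (σ := finRotate 5)
      (isCycle_finRotate (n := 3)) (support_finRotate (n := 3)) 0
    convert h using 2
    ext z
    simp [Fin.exists_fin_two, Set.mem_insert_iff, or_comm]
  exact fun hs => Equiv.Perm.fin_5_not_solvable (solvable_of_surjective hsurj)

theorem exists_nonident_aut_wordMap_id' {G : Type*} [Group G] [Group.IsSolvable G]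
    {n : ℕ} (hn : 3 ≤ n) :
    ∃ σ : MulAut (FreeGroup (Fin n)), σ ≠ 1 ∧
      ∀ x : Fin n → G, (fun i => FreeGroup.lift x (σ.toMonoidHom (FreeGroup.of i))) = x := by
  obtain ⟨d, hd⟩ := (isSolvable_def G).mp ‹_›
  -- a nontrivial element of the d-th derived subgroup of F₂
  have hne : derivedSeries (FreeGroup (Fin 2)) d ≠ ⊥ :=
    fun h => freeGroup_fin2_not_solvable ⟨⟨d, h⟩⟩
  obtain ⟨⟨w, hwmem⟩, hw1⟩ := Subgroup.ne_bot_iff_exists_ne_one.mp hne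
  have hw : w ≠ 1 := fun h => hw1 (Subtype.ext h)
  set e0 : Fin n := ⟨0, by omega⟩ with he0
  set emb : Fin 2 → Fin n := ![⟨1, by omega⟩, ⟨2, by omega⟩] with hemb
  set ι : FreeGroup (Fin 2) →* FreeGroup (Fin n) := FreeGroup.map emb with hι
  have hemb0 : ∀ j, emb j ≠ e0 := by
    intro j
    fin_cases j <;> simp [hemb, he0, Fin.ext_iff]
  have hιw : ι w ≠ 1 := by
    intro h
    set r : FreeGroup (Fin n) →* FreeGroup (Fin 2) :=
      FreeGroup.map (fun k : Fin n => if k = emb 0 then (0 : Fin 2) else 1) with hr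
    have hcomp : r.comp ι = MonoidHom.id _ := by
      refine FreeGroup.ext_hom _ _ fun j => ?_
      fin_cases j <;> simp [hr, hι, hemb, Fin.ext_iff]
    have h2 := congrArg r h
    rw [← MonoidHom.comp_apply, hcomp, map_one] at h2
    exact hw h2
  set φ : FreeGroup (Fin n) →* FreeGroup (Fin n) :=
    FreeGroup.lift (fun i => if i = e0 then ι w * FreeGroup.of e0 else FreeGroup.of i) with hφ
  set ψ : FreeGroup (Fin n) →* FreeGroup (Fin n) :=
    FreeGroup.lift (fun i => if i = e0 then (ι w)⁻¹ * FreeGroup.of e0 else FreeGroup.of i) with hψ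
  have hφι : ∀ v, φ (ι v) = ι v := by
    intro v
    have : φ.comp ι = ι := by
      refine FreeGroup.ext_hom _ _ fun j => ?_
      simp [hι, hφ, hemb0 j]
    rw [← MonoidHom.comp_apply, this]
  have hψι : ∀ v, ψ (ι v) = ι v := by
    intro v
    have : ψ.comp ι = ι := by
      refine FreeGroup.ext_hom _ _ fun j => ?_
      simp [hι, hψ, hemb0 j]
    rw [← MonoidHom.comp_apply, this]
  have h1 : ψ.comp φ = MonoidHom.id _ := by
    refine FreeGroup.ext_hom _ _ fun i => ?_
    by_cases hi : i = e0
    · subst hi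
      simp [hφ, hψ, hψι]
      rw [← hψ, hψι, mul_inv_cancel_left]
    · simp [hφ, hψ, hi]
  have h2 : φ.comp ψ = MonoidHom.id _ := by
    refine FreeGroup.ext_hom _ _ fun i => ?_
    by_cases hi : i = e0
    · subst hi
      simp [hφ, hψ, hφι]
      rw [← hφ, hφι, inv_mul_cancel_left]
    · simp [hφ, hψ, hi]
  refine ⟨MonoidHom.toMulEquiv φ ψ h1 h2, ?_, ?_⟩
  · intro h
    have : φ (FreeGroup.of e0) = FreeGroup.of e0 := by
      have := congrArg (fun (σ : MulAut (FreeGroup (Fin n))) => σ (FreeGroup.of e0)) h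
      simpa using this
    rw [hφ] at this
    simp only [FreeGroup.lift_apply_of, if_pos rfl] at this
    exact hιw (mul_eq_right.mp this)
  · intro x
    funext i
    simp only [MulEquiv.toMonoidHom_eq_coe]
    show FreeGroup.lift x ((MonoidHom.toMulEquiv φ ψ h1 h2) (FreeGroup.of i)) = x i
    have happ : (MonoidHom.toMulEquiv φ ψ h1 h2) (FreeGroup.of i) = φ (FreeGroup.of i) := rfl
    rw [happ]
    by_cases hi : i = e0
    · subst hi
      have hliftw : FreeGroup.lift x (ι w) = 1 := by
        have hmem : FreeGroup.lift x (ι w) ∈ derivedSeries G d := by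
          have := map_derivedSeries_le_derivedSeries ((FreeGroup.lift x).comp ι) d
            (Subgroup.mem_map_of_mem _ hwmem)
          simpa using this
        rw [hd] at hmem
        exact Subgroup.mem_bot.mp hmem
      simp [hφ, hliftw]
    · simp [hφ, hi]

/-- If `G` is solvable and `n ≥ 3`, then there is a nonidentity
automorphism `σ` of `F_n` whose word map on `X = G^n` is the identity; hence
the homomorphism `Aut(F_n) → Sym(X)`, `σ ↦ (σ⁻¹)_X`, is not injective. -/
theorem exists_nonident_aut_wordMap_id {G : Type*} [Group G] [Group.IsSolvable G]
    {n : ℕ} (hn : 3 ≤ n) :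
    ∃ σ : MulAut (FreeGroup (Fin n)), σ ≠ 1 ∧
      ∀ x : Fin n → G, wordMap σ.toMonoidHom x = x :=
  exists_nonident_aut_wordMap_id' hn
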